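/- Let z = (z_1, ..., z_n) be uniformly distributed on the unit sphere in R^n with n >= 2. Then for every 1/n <= delta < 1 and every coordinate i, P(z_i^2 >= delta) <= e^{-((n-1)/2) * delta + 1}. -/

import Mathlib

open MeasureTheory ProbabilityTheory

open Real in
private lemma exp_mul_pdf' (s : ℝ) :
    (fun t => Real.exp (s * t) * gaussianPDFReal 0 1 t)
      = fun t => Real.exp (s ^ 2 / 2) * gaussianPDFReal s 1 t := by
  funext t
  simp only [gaussianPDFReal_def, NNReal.coe_one, mul_one]
  rw [mul_left_comm, mul_left_comm (Real.exp (s ^ 2 / 2)), ← Real.exp_add, ← Real.exp_add]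
  congr 1
  ring_nf

private lemma integral_exp_mul_pdf' (s : ℝ) :
    ∫ t, Real.exp (s * t) * gaussianPDFReal 0 1 t = Real.exp (s ^ 2 / 2) := by
  rw [exp_mul_pdf', integral_const_mul, integral_gaussianPDFReal_eq_one s one_ne_zero, mul_one]

private lemma integrable_exp_mul_pdf' (s : ℝ) :
    Integrable (fun t => Real.exp (s * t) * gaussianPDFReal 0 1 t) := by
  rw [exp_mul_pdf']
  exact (integrable_gaussianPDFReal s 1).const_mul _

open Real in
private lemma gaussian_tail' {a : ℝ} (ha : 0 ≤ a) :
    gaussianReal 0 1 {t : ℝ | a ≤ t ^ 2} ≤ ENNReal.ofReal (2 * Real.exp (-(a / 2))) := by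
  set s := Real.sqrt a with hs
  have hs2 : s ^ 2 = a := Real.sq_sqrt ha
  have hsnn : 0 ≤ s := Real.sqrt_nonneg a
  set g : ℝ → ℝ := fun t =>
    Real.exp (-a) * (Real.exp (s * t) * gaussianPDFReal 0 1 t)
      + Real.exp (-a) * (Real.exp (-s * t) * gaussianPDFReal 0 1 t) with hg
  have hg_int : Integrable g :=
    ((integrable_exp_mul_pdf' s).const_mul _).add ((integrable_exp_mul_pdf' (-s)).const_mul _)
  have hg_nonneg : ∀ t, 0 ≤ g t := by
    intro t
    have := gaussianPDFReal_nonneg 0 1 t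
    positivity
  have hmexp : ∀ c : ℝ, Measurable fun t : ℝ => Real.exp (c * t) * gaussianPDFReal 0 1 t :=
    fun c => ((Real.continuous_exp.comp (continuous_const.mul continuous_id)).measurable).mul
      (measurable_gaussianPDFReal 0 1)
  have hg_meas : Measurable fun t => ENNReal.ofReal (g t) :=
    Measurable.ennreal_ofReal (((hmexp s).const_mul _).add ((hmexp (-s)).const_mul _))
  calc gaussianReal 0 1 {t : ℝ | a ≤ t ^ 2}
      = ∫⁻ t in {t : ℝ | a ≤ t ^ 2}, ENNReal.ofReal (gaussianPDFReal 0 1 t) :=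
        gaussianReal_apply 0 one_ne_zero _
    _ ≤ ∫⁻ t in {t : ℝ | a ≤ t ^ 2}, ENNReal.ofReal (g t) := by
        refine setLIntegral_mono hg_meas fun t ht => ?_
        refine ENNReal.ofReal_le_ofReal ?_
        have hpdf := gaussianPDFReal_nonneg 0 1 t
        have h1 : 1 ≤ Real.exp (-a) * Real.exp (s * t) + Real.exp (-a) * Real.exp (-s * t) := by
          rcases le_or_gt 0 t with h | h
          · have hst : a ≤ s * t := by
              have hle : s ≤ t := by
                rw [hs]
                calc √a ≤ √(t ^ 2) := Real.sqrt_le_sqrt ht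
                  _ = |t| := Real.sqrt_sq_eq_abs t
                  _ = t := abs_of_nonneg h
              nlinarith [mul_le_mul_of_nonneg_left hle hsnn]
            have : (1:ℝ) ≤ Real.exp (-a) * Real.exp (s * t) := by
              rw [← Real.exp_add]
              have : 0 ≤ -a + s * t := by linarith
              calc (1:ℝ) = Real.exp 0 := (Real.exp_zero).symm
                _ ≤ _ := Real.exp_le_exp.mpr this
            nlinarith [Real.exp_pos (-a), Real.exp_pos (-s * t),
              mul_pos (Real.exp_pos (-a)) (Real.exp_pos (-s * t))]
          · have hst : a ≤ -s * t := by
              have hle : s ≤ -t := by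
                rw [hs]
                calc √a ≤ √(t ^ 2) := Real.sqrt_le_sqrt ht
                  _ = |t| := Real.sqrt_sq_eq_abs t
                  _ = -t := abs_of_neg h
              nlinarith [mul_le_mul_of_nonneg_left hle hsnn]
            have : (1:ℝ) ≤ Real.exp (-a) * Real.exp (-s * t) := by
              rw [← Real.exp_add]
              have : 0 ≤ -a + -s * t := by linarith
              calc (1:ℝ) = Real.exp 0 := (Real.exp_zero).symm
                _ ≤ _ := Real.exp_le_exp.mpr this
            nlinarith [mul_pos (Real.exp_pos (-a)) (Real.exp_pos (s * t))]
        calc gaussianPDFReal 0 1 t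
            = 1 * gaussianPDFReal 0 1 t := (one_mul _).symm
          _ ≤ (Real.exp (-a) * Real.exp (s * t) + Real.exp (-a) * Real.exp (-s * t))
                * gaussianPDFReal 0 1 t := mul_le_mul_of_nonneg_right h1 hpdf
          _ = g t := by rw [hg]; ring
    _ ≤ ∫⁻ t, ENNReal.ofReal (g t) := setLIntegral_le_lintegral _ _
    _ = ENNReal.ofReal (∫ t, g t) :=
        (ofReal_integral_eq_lintegral_ofReal hg_int (ae_of_all _ hg_nonneg)).symm
    _ ≤ ENNReal.ofReal (2 * Real.exp (-(a / 2))) := by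
        apply ENNReal.ofReal_le_ofReal
        rw [hg]
        rw [integral_add ((integrable_exp_mul_pdf' s).const_mul _)
          ((integrable_exp_mul_pdf' (-s)).const_mul _), integral_const_mul, integral_const_mul,
          integral_exp_mul_pdf', integral_exp_mul_pdf']
        have key : Real.exp (-a) * Real.exp (s ^ 2 / 2) = Real.exp (-(a / 2)) := by
          rw [← Real.exp_add]
          congr 1
          rw [hs2]; ring
        rw [neg_sq, key, two_mul]

open scoped ENNReal in
private lemma lintegral_pi_prod' {m : ℕ} (g : ℝ → ℝ≥0∞) (hg : Measurable g) :
    ∫⁻ y : Fin m → ℝ, ∏ j, g (y j) ∂(Measure.pi fun _ : Fin m => gaussianReal 0 1)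
      = (∫⁻ t, g t ∂(gaussianReal 0 1)) ^ m := by
  induction m with
  | zero => simp
  | succ m ih =>
    have h := measurePreserving_piFinSuccAbove (fun _ : Fin (m + 1) => gaussianReal 0 1) 0
    set T := MeasurableEquiv.piFinSuccAbove (fun _ : Fin (m + 1) => ℝ) 0 with hT
    have hGmeas : Measurable fun z : ℝ × (Fin m → ℝ) => g z.1 * ∏ j, g (z.2 j) := by
      apply (hg.comp measurable_fst).mul
      exact Finset.measurable_prod _ fun j _ =>
        hg.comp ((measurable_pi_apply j).comp measurable_snd)
    calc ∫⁻ y : Fin (m + 1) → ℝ, ∏ j, g (y j) ∂(Measure.pi fun _ => gaussianReal 0 1)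
        = ∫⁻ y : Fin (m + 1) → ℝ, (fun z : ℝ × (Fin m → ℝ) => g z.1 * ∏ j, g (z.2 j)) (T y)
            ∂(Measure.pi fun _ => gaussianReal 0 1) := by
          refine lintegral_congr fun y => ?_
          simp only [hT, MeasurableEquiv.piFinSuccAbove_apply]
          exact Fin.prod_univ_succAbove (fun j => g (y j)) 0
      _ = ∫⁻ z, g z.1 * ∏ j, g (z.2 j)
            ∂((gaussianReal 0 1).prod (Measure.pi fun _ : Fin m => gaussianReal 0 1)) :=
          h.lintegral_comp hGmeas
      _ = (∫⁻ t, g t ∂(gaussianReal 0 1))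
            * ∫⁻ y : Fin m → ℝ, ∏ j, g (y j) ∂(Measure.pi fun _ : Fin m => gaussianReal 0 1) :=
          lintegral_prod_mul (f := g) (g := fun y : Fin m → ℝ => ∏ j, g (y j)) hg.aemeasurable
            (Finset.measurable_prod _ fun j _ => hg.comp (measurable_pi_apply j)).aemeasurable
      _ = (∫⁻ t, g t ∂(gaussianReal 0 1)) ^ (m + 1) := by rw [ih, pow_succ]; ring

open Real in
private lemma exp_neg_mul_sq_pdf' {b : ℝ} :
    (fun t => Real.exp (-b * t ^ 2) * gaussianPDFReal 0 1 t)
      = fun t => (√(2 * π))⁻¹ * Real.exp (-(b + 1 / 2) * t ^ 2) := by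
  funext t
  simp only [gaussianPDFReal_def, NNReal.coe_one, mul_one, sub_zero]
  rw [mul_left_comm, ← Real.exp_add]
  congr 2
  ring

open Real in
private lemma lintegral_exp_neg_mul_sq_gauss' {b : ℝ} (hb : 0 ≤ b) :
    ∫⁻ t, ENNReal.ofReal (Real.exp (-b * t ^ 2)) ∂(gaussianReal 0 1)
      = ENNReal.ofReal ((√(2 * π))⁻¹ * √(π / (b + 1 / 2))) := by
  have hbpos : (0:ℝ) < b + 1 / 2 := by linarith
  have hint : Integrable (fun t => Real.exp (-b * t ^ 2) * gaussianPDFReal 0 1 t) := by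
    rw [exp_neg_mul_sq_pdf']
    exact (integrable_exp_neg_mul_sq hbpos).const_mul _
  have hmeas : Measurable fun t : ℝ => ENNReal.ofReal (Real.exp (-b * t ^ 2)) :=
    Measurable.ennreal_ofReal
      (Real.continuous_exp.comp ((continuous_const.mul (continuous_pow 2)))).measurable
  rw [gaussianReal_of_var_ne_zero 0 one_ne_zero,
    lintegral_withDensity_eq_lintegral_mul _ (measurable_gaussianPDF 0 1) hmeas]
  have : ∀ t : ℝ, (gaussianPDF 0 1 * fun t => ENNReal.ofReal (Real.exp (-b * t ^ 2))) t
      = ENNReal.ofReal (Real.exp (-b * t ^ 2) * gaussianPDFReal 0 1 t) := by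
    intro t
    simp only [Pi.mul_apply, gaussianPDF]
    rw [← ENNReal.ofReal_mul (gaussianPDFReal_nonneg 0 1 t), mul_comm]
  rw [lintegral_congr this,
    ← ofReal_integral_eq_lintegral_ofReal hint
      (ae_of_all _ fun t => mul_nonneg (Real.exp_nonneg _) (gaussianPDFReal_nonneg 0 1 t))]
  congr 1
  rw [exp_neg_mul_sq_pdf', integral_const_mul]
  congr 1
  have := integral_gaussian (b + 1 / 2)
  simpa using this

/-- The standard Gaussian measure on `ℝ^n` (as `EuclideanSpace`), i.e. the product of `n`
standard one-dimensional Gaussians. -/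
noncomputable def stdGaussian (n : ℕ) : Measure (EuclideanSpace ℝ (Fin n)) :=
  Measure.map (⇑(EuclideanSpace.equiv (Fin n) ℝ).symm)
    (Measure.pi fun _ : Fin n => gaussianReal 0 1)

/-- The uniform probability measure on the unit sphere of `ℝ^n`, realized as the law of
`x / ‖x‖` for a standard Gaussian vector `x`. -/
noncomputable def sphereUniform (n : ℕ) : Measure (EuclideanSpace ℝ (Fin n)) :=
  Measure.map (fun x => ‖x‖⁻¹ • x) (stdGaussian n)

open Real in
open scoped ENNReal in
/-- Tail bound for a coordinate of a uniform random point `z` on the unit sphere in `ℝ^n`,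
`n ≥ 2`: for `1/n ≤ δ < 1` and every coordinate `i`,
`P(z_i^2 ≥ δ) ≤ exp(-((n-1)/2) δ + 1)`. -/
theorem stmt4 (n : ℕ) (hn : 2 ≤ n) (δ : ℝ) (hδl : 1 / (n : ℝ) ≤ δ) (hδu : δ < 1)
    (i : Fin n) :
    sphereUniform n {z | δ ≤ (z i) ^ 2} ≤
      ENNReal.ofReal (Real.exp (-(((n : ℝ) - 1) / 2) * δ + 1)) := by
  classical
  have hn0 : (0:ℝ) < n := by exact_mod_cast (by omega : 0 < n)
  have hδ0 : 0 < δ := lt_of_lt_of_le (div_pos one_pos hn0) hδl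
  have h1δ : 0 < 1 - δ := by linarith
  obtain ⟨m, rfl⟩ : ∃ m, n = m + 1 := ⟨n - 1, by omega⟩
  have hproj : Measurable fun z : EuclideanSpace ℝ (Fin (m+1)) => z i := (EuclideanSpace.proj i).continuous.measurable
  have hSmeas : MeasurableSet {z : EuclideanSpace ℝ (Fin (m+1)) | δ ≤ z i ^ 2} :=
    measurableSet_le measurable_const (hproj.pow_const 2)
  have hfmeas : Measurable fun x : EuclideanSpace ℝ (Fin (m+1)) => ‖x‖⁻¹ • x :=
    (measurable_norm.inv).smul measurable_id
  have hEmeas : Measurable ⇑(EuclideanSpace.equiv (Fin (m+1)) ℝ).symm := (EuclideanSpace.equiv (Fin (m+1)) ℝ).symm.continuous.measurable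
  set B : Set (Fin (m+1) → ℝ) := {x | δ * ∑ j, x j ^ 2 ≤ x i ^ 2} with hB_def
  have stepA : sphereUniform (m+1) {z | δ ≤ z i ^ 2}
      ≤ (Measure.pi fun _ : Fin (m+1) => gaussianReal 0 1) B := by
    rw [sphereUniform, Measure.map_apply hfmeas hSmeas, _root_.stdGaussian,
      Measure.map_apply hEmeas (hfmeas hSmeas)]
    apply measure_mono
    intro x hx
    simp only [Set.mem_preimage, Set.mem_setOf_eq] at hx ⊢
    set N := ∑ j, x j ^ 2 with hN
    have hN0 : 0 ≤ N := Finset.sum_nonneg fun j _ => sq_nonneg _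
    have happ : ∀ j, ((EuclideanSpace.equiv (Fin (m+1)) ℝ).symm x) j = x j := fun j => rfl
    have hnormsq : ‖(EuclideanSpace.equiv (Fin (m+1)) ℝ).symm x‖ ^ 2 = N := by
      rw [EuclideanSpace.norm_eq, Real.sq_sqrt (Finset.sum_nonneg fun j _ => sq_nonneg _)]
      simp [happ, Real.norm_eq_abs, sq_abs, hN]
    have hsmul : ((‖(EuclideanSpace.equiv (Fin (m+1)) ℝ).symm x‖⁻¹ •
        (EuclideanSpace.equiv (Fin (m+1)) ℝ).symm x) i)
        = ‖(EuclideanSpace.equiv (Fin (m+1)) ℝ).symm x‖⁻¹ * x i := rfl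
    rw [hsmul] at hx
    rcases eq_or_lt_of_le hN0 with h0 | hpos
    · exfalso
      have hz : ‖(EuclideanSpace.equiv (Fin (m+1)) ℝ).symm x‖ = 0 := by
        have h2 := hnormsq
        rw [← h0] at h2
        exact pow_eq_zero_iff (n := 2) (by norm_num) |>.mp h2
      rw [hz] at hx
      simp at hx
      linarith
    · have hxi : δ ≤ x i ^ 2 / N := by
        have heq : (‖(EuclideanSpace.equiv (Fin (m+1)) ℝ).symm x‖⁻¹ * x i) ^ 2
            = x i ^ 2 / N := by
          rw [mul_pow, inv_pow, hnormsq, inv_mul_eq_div]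
        rwa [heq] at hx
      exact (le_div_iff₀ hpos).mp hxi
  refine stepA.trans ?_
  set c : ℝ := δ / (1 - δ) with hc_def
  have hc : 0 ≤ c := div_nonneg hδ0.le h1δ.le
  set γ := gaussianReal 0 1 with hγ
  set C : Set (ℝ × (Fin m → ℝ)) := {z | δ * (z.1 ^ 2 + ∑ j, z.2 j ^ 2) ≤ z.1 ^ 2} with hC_def
  have hCmeas : MeasurableSet C := by
    apply measurableSet_le
    · exact measurable_const.mul ((measurable_fst.pow_const 2).add
        (Finset.measurable_sum _ fun j _ =>
          ((measurable_pi_apply j).comp measurable_snd).pow_const 2))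
    · exact measurable_fst.pow_const 2
  have h := measurePreserving_piFinSuccAbove (fun _ : Fin (m + 1) => gaussianReal 0 1) i
  have hBC : B = (MeasurableEquiv.piFinSuccAbove (fun _ : Fin (m+1) => ℝ) i) ⁻¹' C := by
    ext x
    simp only [hB_def, Set.mem_setOf_eq, Set.mem_preimage, hC_def,
      MeasurableEquiv.piFinSuccAbove_apply, Fin.insertNthEquiv_symm_apply, Fin.removeNth]
    rw [Fin.sum_univ_succAbove (fun j => x j ^ 2) i]
  have slice_eq : ∀ y : Fin m → ℝ,
      (fun t => (t, y)) ⁻¹' C = {t : ℝ | c * ∑ j, y j ^ 2 ≤ t ^ 2} := by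
    intro y
    ext t
    simp only [Set.mem_preimage, hC_def, Set.mem_setOf_eq, hc_def]
    rw [div_mul_eq_mul_div, div_le_iff₀ h1δ]
    constructor <;> intro hh <;> nlinarith
  set g : ℝ → ℝ≥0∞ := fun t => ENNReal.ofReal (Real.exp (-(c/2) * t ^ 2)) with hg_def
  have hgmeas : Measurable g := Measurable.ennreal_ofReal
    (Real.continuous_exp.comp (continuous_const.mul (continuous_pow 2))).measurable
  have hprod : ∀ y : Fin m → ℝ,
      ENNReal.ofReal (2 * Real.exp (-((c * ∑ j, y j ^ 2) / 2))) = 2 * ∏ j, g (y j) := by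
    intro y
    rw [ENNReal.ofReal_mul (by norm_num), ENNReal.ofReal_ofNat]
    congr 1
    have hexp : -((c * ∑ j, y j ^ 2) / 2) = ∑ j, -(c/2) * y j ^ 2 := by
      rw [← Finset.mul_sum]
      ring
    rw [hexp, Real.exp_sum, ← ENNReal.ofReal_prod_of_nonneg fun j _ => Real.exp_nonneg _]
  have hval : (√(2*π))⁻¹ * √(π / (c/2 + 1/2)) = √(1-δ) := by
    have h1 : π / (c/2 + 1/2) = (2*π) * (1-δ) := by
      rw [hc_def]
      field_simp
      ring
    rw [h1, Real.sqrt_mul (by positivity : (0:ℝ) ≤ 2 * π) (1 - δ), ← mul_assoc,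
      inv_mul_cancel₀ (by positivity : √(2*π) ≠ 0), one_mul]
  calc (Measure.pi fun _ : Fin (m+1) => gaussianReal 0 1) B
      = (γ.prod (Measure.pi fun _ : Fin m => γ)) C := by
        rw [hBC]
        exact h.measure_preimage_equiv _
    _ = ∫⁻ y, γ ((fun t => (t, y)) ⁻¹' C) ∂(Measure.pi fun _ : Fin m => γ) :=
        Measure.prod_apply_symm hCmeas
    _ ≤ ∫⁻ y, ENNReal.ofReal (2 * Real.exp (-((c * ∑ j, y j ^ 2) / 2)))
          ∂(Measure.pi fun _ : Fin m => γ) := by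
        refine lintegral_mono fun y => ?_
        rw [slice_eq y]
        exact gaussian_tail' (mul_nonneg hc (Finset.sum_nonneg fun j _ => sq_nonneg _))
    _ = 2 * (∫⁻ t, g t ∂γ) ^ m := by
        have hpm : Measurable fun y : Fin m → ℝ => ∏ j, g (y j) :=
          Finset.measurable_prod _ fun j _ => hgmeas.comp (measurable_pi_apply j)
        simp_rw [hprod]
        rw [lintegral_const_mul 2 hpm, lintegral_pi_prod' g hgmeas]
    _ = ENNReal.ofReal (2 * √(1-δ) ^ m) := by
        rw [hg_def, hγ, lintegral_exp_neg_mul_sq_gauss' (by positivity : (0:ℝ) ≤ c/2), hval,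
          ENNReal.ofReal_mul (by norm_num), ENNReal.ofReal_ofNat,
          ENNReal.ofReal_pow (Real.sqrt_nonneg _)]
    _ ≤ ENNReal.ofReal (Real.exp (-((((m+1 : ℕ) : ℝ) - 1) / 2) * δ + 1)) := by
        apply ENNReal.ofReal_le_ofReal
        have hsq : √(1-δ) ≤ Real.exp (-(δ/2)) := by
          have h2 : (1-δ) ≤ Real.exp (-δ) := by nlinarith [Real.add_one_le_exp (-δ)]
          calc √(1-δ) ≤ √(Real.exp (-δ)) := Real.sqrt_le_sqrt h2
            _ = Real.exp (-(δ/2)) := by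
              rw [show Real.exp (-δ) = Real.exp (-(δ/2)) ^ 2 by
                rw [pow_two, ← Real.exp_add]; ring_nf]
              exact Real.sqrt_sq (Real.exp_nonneg _)
        have h2e : (2:ℝ) ≤ Real.exp 1 := by nlinarith [Real.add_one_le_exp 1]
        calc 2 * √(1-δ) ^ m ≤ Real.exp 1 * Real.exp (-(δ/2)) ^ m :=
              mul_le_mul h2e (pow_le_pow_left₀ (Real.sqrt_nonneg _) hsq m)
                (by positivity) (Real.exp_nonneg 1)
          _ = Real.exp (-((((m+1 : ℕ) : ℝ) - 1) / 2) * δ + 1) := by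
              rw [← Real.exp_nat_mul, ← Real.exp_add]
              congr 1
              push_cast
              ring
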